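/- If T is a tree, v ∈ V(T), and T_v is a subtree of T rooted at v such that T_v contains a path on k vertices but T_v − v does not, then ψ_k(T) = ψ_k(T ∖ T_v) + 1. -/

import Mathlib

open SimpleGraph

variable {V : Type*}

/-- `S` is a `k`-path vertex cover of `G`: every path on `k` vertices meets `S`. -/
def IsPathVC (G : SimpleGraph V) (k : ℕ) (S : Set V) : Prop :=
  ∀ ⦃u v : V⦄ (w : G.Walk u v), w.IsPath → w.length + 1 = k → ∃ x ∈ w.support, x ∈ S

/-- `psi G k` is the minimum cardinality of a `k`-path vertex cover of `G`. -/
noncomputable def psi (G : SimpleGraph V) (k : ℕ) : ℕ :=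
  sInf {n | ∃ S : Set V, IsPathVC G k S ∧ S.ncard = n}

namespace PsiAux

/-- The inclusion homomorphism from an induced subgraph. -/
def inducedHom (G : SimpleGraph V) (s : Set V) : G.induce s →g G :=
  ⟨Subtype.val, fun {a b} h => h⟩

/-- Restrict a walk whose support lies in `s` to the induced subgraph on `s`. -/
def induceWalk {G : SimpleGraph V} (s : Set V) :
    ∀ {a b : V} (p : G.Walk a b) (h : ∀ x ∈ p.support, x ∈ s),
      (G.induce s).Walk ⟨a, h a p.start_mem_support⟩ ⟨b, h b p.end_mem_support⟩
  | _, _, Walk.nil, _ => Walk.nil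
  | a, b, Walk.cons (v := c) hadj p, h =>
      Walk.cons
        (show (G.induce s).Adj ⟨a, h a (Walk.cons hadj p).start_mem_support⟩
          ⟨c, h c (List.mem_cons_of_mem _ p.start_mem_support)⟩ from hadj)
        (induceWalk s p fun x hx => h x (List.mem_cons_of_mem _ hx))

lemma induceWalk_support_map {G : SimpleGraph V} (s : Set V) :
    ∀ {a b : V} (p : G.Walk a b) (h : ∀ x ∈ p.support, x ∈ s),
      (induceWalk s p h).support.map Subtype.val = p.support
  | _, _, Walk.nil, _ => rfl
  | _, _, Walk.cons hadj p, h => by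
      simp only [induceWalk, Walk.support_cons, List.map_cons]
      rw [induceWalk_support_map]

lemma induceWalk_length {G : SimpleGraph V} (s : Set V) :
    ∀ {a b : V} (p : G.Walk a b) (h : ∀ x ∈ p.support, x ∈ s),
      (induceWalk s p h).length = p.length
  | _, _, Walk.nil, _ => rfl
  | _, _, Walk.cons hadj p, h => by
      simp only [induceWalk, Walk.length_cons]
      exact congrArg Nat.succ (induceWalk_length s p _)

lemma induceWalk_isPath {G : SimpleGraph V} (s : Set V) {a b : V} (p : G.Walk a b)
    (h : ∀ x ∈ p.support, x ∈ s) (hp : p.IsPath) : (induceWalk s p h).IsPath := by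
  rw [Walk.isPath_def]
  have := hp.support_nodup
  rw [← induceWalk_support_map s p h] at this
  exact this.of_map _

lemma psi_set_nonempty {W : Type*} [Fintype W] (G : SimpleGraph W) (k : ℕ) :
    {n | ∃ S : Set W, IsPathVC G k S ∧ S.ncard = n}.Nonempty :=
  ⟨(Set.univ : Set W).ncard, Set.univ,
    fun a b w _ _ => ⟨a, w.start_mem_support, Set.mem_univ a⟩, rfl⟩

end PsiAux

open PsiAux

theorem psi_tree_recursion [Fintype V] (T : SimpleGraph V) (hT : T.IsTree) (k : ℕ)
    (u v : V) (S : Set V)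
    -- `S` is the vertex set of `T_v`: the set of vertices `w` whose (unique) path
    -- from the root `u` passes through `v`, i.e. `v` together with its descendants.
    (hS : ∀ w : V, w ∈ S ↔ ∀ (p : T.Walk u w), p.IsPath → v ∈ p.support)
    -- `T_v` contains a path on `k` vertices
    (h1 : ∃ (x y : ↥S) (w : (T.induce S).Walk x y), w.IsPath ∧ w.length + 1 = k)
    -- `T_v − v` contains no path on `k` vertices
    (h2 : ¬ ∃ (x y : ↥(S \ {v})) (w : (T.induce (S \ {v})).Walk x y),
      w.IsPath ∧ w.length + 1 = k) :
    psi T k = psi (T.induce Sᶜ) k + 1 := by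
  classical
  have hvS : v ∈ S := (hS v).mpr fun p _ => p.end_mem_support
  -- key separation lemma: a walk from a vertex outside S to a vertex in S passes through v
  have keyC : ∀ (x y : V), x ∈ S → y ∉ S → ∀ q : T.Walk y x, v ∉ q.support → False := by
    intro x y hx hy q hq
    have hy' : ∃ p : T.Walk u y, p.IsPath ∧ v ∉ p.support := by
      by_contra hcon
      push_neg at hcon
      exact hy ((hS y).mpr hcon)
    obtain ⟨p, hp, hpv⟩ := hy'
    have hb := (hS x).mp hx ((p.append q).bypass) ((p.append q).bypass_isPath)
    have hmem := (p.append q).support_bypass_subset hb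
    rw [Walk.support_append] at hmem
    rcases List.mem_append.mp hmem with h | h
    · exact hpv h
    · exact hq (List.mem_of_mem_tail h)
  -- any walk avoiding v that touches S is entirely inside S \ {v}
  have keyS : ∀ {a b : V} (p : T.Walk a b), v ∉ p.support →
      (∃ x ∈ p.support, x ∈ S) → ∀ y ∈ p.support, y ∈ S \ {v} := by
    intro a b p hv hex y hy
    obtain ⟨x, hx, hxS⟩ := hex
    refine ⟨?_, fun h => hv (h ▸ hy)⟩
    by_contra hyS
    refine keyC x y hxS hyS ((p.takeUntil y hy).reverse.append (p.takeUntil x hx)) ?_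
    intro hvq
    rw [Walk.support_append] at hvq
    rcases List.mem_append.mp hvq with h | h
    · rw [Walk.support_reverse] at h
      exact hv (p.support_takeUntil_subset hy (List.mem_reverse.mp h))
    · exact hv (p.support_takeUntil_subset hx (List.mem_of_mem_tail h))
  -- the minimum is attained for the induced graph
  obtain ⟨S', hS'cov, hS'card⟩ :
      ∃ S' : Set ↥(Sᶜ), IsPathVC (T.induce Sᶜ) k S' ∧ S'.ncard = psi (T.induce Sᶜ) k :=
    Nat.sInf_mem (psi_set_nonempty (T.induce Sᶜ) k)
  -- build a cover of T
  have hcov : IsPathVC T k (insert v (Subtype.val '' S')) := by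
    intro a b p hp hl
    by_cases hv : v ∈ p.support
    · exact ⟨v, hv, Set.mem_insert _ _⟩
    by_cases hxs : ∃ x ∈ p.support, x ∈ S
    · exfalso
      have hsub := keyS p hv hxs
      exact h2 ⟨⟨a, hsub a p.start_mem_support⟩, ⟨b, hsub b p.end_mem_support⟩,
        induceWalk _ p hsub, induceWalk_isPath _ p hsub hp,
        by rw [induceWalk_length]; exact hl⟩
    · push_neg at hxs
      have hsub : ∀ x ∈ p.support, x ∈ Sᶜ := fun x hx => hxs x hx
      obtain ⟨z, hz, hzS'⟩ := hS'cov (induceWalk Sᶜ p hsub)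
        (induceWalk_isPath _ p hsub hp) (by rw [induceWalk_length]; exact hl)
      refine ⟨z.val, ?_, Set.mem_insert_of_mem _ ⟨z, hzS', rfl⟩⟩
      rw [← induceWalk_support_map Sᶜ p hsub]
      exact List.mem_map_of_mem hz
  have le1 : psi T k ≤ psi (T.induce Sᶜ) k + 1 := by
    have hvnot : v ∉ Subtype.val '' S' := by
      rintro ⟨z, _, rfl⟩
      exact z.2 hvS
    have hcard : (insert v (Subtype.val '' S')).ncard = psi (T.induce Sᶜ) k + 1 := by
      rw [Set.ncard_insert_of_notMem hvnot (Set.toFinite _),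
        Set.ncard_image_of_injective _ Subtype.val_injective, hS'card]
    exact hcard ▸ Nat.sInf_le ⟨_, hcov, rfl⟩
  -- the minimum is attained for T
  obtain ⟨C, hCcov, hCcard⟩ :
      ∃ C : Set V, IsPathVC T k C ∧ C.ncard = psi T k :=
    Nat.sInf_mem (psi_set_nonempty T k)
  -- C must meet S
  obtain ⟨x0, y0, w, hwp, hwl⟩ := h1
  obtain ⟨x, hx, hxC⟩ := hCcov (w.map (inducedHom T S))
    (Walk.map_isPath_of_injective Subtype.val_injective hwp)
    (by rw [Walk.length_map]; exact hwl)
  have hxS : x ∈ S := by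
    rw [Walk.support_map] at hx
    obtain ⟨z, _, rfl⟩ := List.mem_map.mp hx
    exact z.2
  -- restriction of C is a cover of the induced graph
  set C' : Set ↥(Sᶜ) := Subtype.val ⁻¹' C with hC'
  have hC'cov : IsPathVC (T.induce Sᶜ) k C' := by
    intro a b q hq hl
    obtain ⟨y, hy, hyC⟩ := hCcov (q.map (inducedHom T Sᶜ))
      (Walk.map_isPath_of_injective Subtype.val_injective hq)
      (by rw [Walk.length_map]; exact hl)
    rw [Walk.support_map] at hy
    obtain ⟨z, hz, rfl⟩ := List.mem_map.mp hy
    exact ⟨z, hz, hyC⟩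
  have himg : Subtype.val '' C' = C ∩ Sᶜ := by
    ext y
    constructor
    · rintro ⟨z, hz, rfl⟩
      exact ⟨hz, z.2⟩
    · rintro ⟨h1', h2'⟩
      exact ⟨⟨y, h2'⟩, h1', rfl⟩
  have hcard2 : C'.ncard + 1 ≤ C.ncard := by
    have hxnot : x ∉ C ∩ Sᶜ := fun h => h.2 hxS
    have hsub : insert x (C ∩ Sᶜ) ⊆ C := by
      rintro y (rfl | hy)
      · exact hxC
      · exact hy.1
    calc C'.ncard + 1 = (C ∩ Sᶜ).ncard + 1 := by
          rw [← himg, Set.ncard_image_of_injective _ Subtype.val_injective]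
      _ = (insert x (C ∩ Sᶜ)).ncard := (Set.ncard_insert_of_notMem hxnot (Set.toFinite _)).symm
      _ ≤ C.ncard := Set.ncard_le_ncard hsub (Set.toFinite _)
  have le2 : psi (T.induce Sᶜ) k + 1 ≤ psi T k := by
    have h : psi (T.induce Sᶜ) k ≤ C'.ncard := by
      apply Nat.sInf_le
      exact ⟨C', hC'cov, rfl⟩
    omega
  omega
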